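/- Let L ≥ 2 and k ≥ 1 be integers and 0 < p < 1, 0 ≤ q < 1 real numbers. Let Y, Z_1, …, Z_{L-1}, U, V be independent ℕ-valued random variables on a common probability space, where Y is geometric with parameter p, the Z_j are geometric with parameter q, U is negative binomial NB(k-1, p), and V is negative binomial NB(k-1, q). Set Z := max_{1 ≤ j ≤ L-1} Z_j and define W := Y + U on the event {Z ≤ Y} and W := Z + V on the event {Z > Y}. Then for every m ∈ ℕ, P(W = m) = p^{m-k+1}(1-p)^{k+1} · Σ_{(m₁,m₂) ∈ ℕ², m₁+m₂=m} (1 - q^{m₁+1})^{L-1} · C(m₂, k-1) + Σ_{(m₁,m₂) ∈ ℕ², m₁+m₂=m} [(1 - q^{m₁+1})^{L-1} - (1 - q^{m₁})^{L-1}] · (1 - p^{m₁}) · C(m₂, k-1) · q^{m₂-k+1}(1-q)^k. -/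

import Mathlib

open MeasureTheory ProbabilityTheory

lemma aux_geom (r : ℝ) (n : ℕ) : ∑ i ∈ Finset.range n, r ^ i * (1 - r) = 1 - r ^ n := by
  induction n with
  | zero => simp
  | succ n ih => rw [Finset.sum_range_succ, ih]; ring

lemma aux_cdf {Ω : Type*} [MeasurableSpace Ω] (μ : Measure Ω) [IsProbabilityMeasure μ]
    (f : Ω → ℕ) (hf : Measurable f) (r : ℝ)
    (h : ∀ m : ℕ, (μ {ω | f ω = m}).toReal = r ^ m * (1 - r)) (n : ℕ) :
    (μ {ω | f ω < n}).toReal = 1 - r ^ n := by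
  have hs : {ω | f ω < n} = ⋃ i ∈ Finset.range n, {ω | f ω = i} := by
    ext ω; simp
  rw [hs, measure_biUnion_finset ?_
    (fun i _ => show MeasurableSet {ω | f ω = i} from hf (measurableSet_singleton i))]
  · rw [ENNReal.toReal_sum (fun i _ => measure_ne_top μ _)]
    simp_rw [h]
    exact aux_geom r n
  · intro i _ j _ hij
    simp only [Set.disjoint_left, Set.mem_setOf_eq]
    rintro ω h1 h2
    exact hij (h1.symm.trans h2)

lemma aux_key {Ω : Type*} [MeasurableSpace Ω] (μ : Measure Ω) [IsProbabilityMeasure μ] (n : ℕ)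
    (Y U V : Ω → ℕ) (Z : Fin n → Ω → ℕ)
    (hindep : iIndepFun
      (Sum.elim ![Y, U, V] Z : (Fin 3 ⊕ Fin n) → Ω → ℕ) μ)
    (sY sU sV : Set ℕ) (a : ℕ) :
    μ (Y ⁻¹' sY ∩ U ⁻¹' sU ∩ V ⁻¹' sV ∩ {ω | ∀ j, Z j ω ≤ a}) =
      μ (Y ⁻¹' sY) * μ (U ⁻¹' sU) * μ (V ⁻¹' sV) * ∏ j, μ {ω | Z j ω ≤ a} := by
  classical
  have h := hindep.measure_inter_preimage_eq_mul Finset.univ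
    (sets := Sum.elim ![sY, sU, sV] fun _ => Set.Iic a)
    (fun i _ => MeasurableSet.of_discrete)
  have hset : (⋂ i ∈ Finset.univ,
      (Sum.elim ![Y, U, V] Z : (Fin 3 ⊕ Fin n) → Ω → ℕ) i ⁻¹'
        (Sum.elim ![sY, sU, sV] fun _ => Set.Iic a) i)
      = Y ⁻¹' sY ∩ U ⁻¹' sU ∩ V ⁻¹' sV ∩ {ω | ∀ j, Z j ω ≤ a} := by
    ext ω
    simp [Sum.forall, Fin.forall_fin_succ, and_assoc]
  rw [hset] at h
  rw [h, Fintype.prod_sum_type]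
  simp [Fin.prod_univ_three]
  rfl

/-- Theorem 1 of the paper: the length distribution of the `k`-mismatch common
substrings returned by the kmacs heuristic. Here `Y` (geometric with parameter `p`)
models the longest exact homologous match, `Z_1, …, Z_{L-1}` (geometric with parameter
`q`) the longest exact background matches, `U` (negative binomial `NB(k-1, p)`) and `V`
(negative binomial `NB(k-1, q)`) the subsequent gap-free extensions; all are independent.
With `Z = max_j Z_j` and `W = Y + U` on `{Z ≤ Y}`, `W = Z + V` on `{Z > Y}`, we have for
every `m`:
`P(W = m) = p^(m-k+1) (1-p)^(k+1) Σ_{m₁+m₂=m} (1-q^(m₁+1))^(L-1) C(m₂,k-1)`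
`  + Σ_{m₁+m₂=m} ((1-q^(m₁+1))^(L-1) - (1-q^(m₁))^(L-1)) (1-p^(m₁)) C(m₂,k-1) q^(m₂-k+1) (1-q)^k`.
(The exponents `m - k + 1` and `m₂ - k + 1` are written as the truncated natural-number
subtractions `m + 1 - k` and `m₂ + 1 - k`; the terms where these would be negative vanish
because the binomial coefficient `C(m₂, k-1)` is zero there.) -/
theorem kmacs_heuristic_length_distribution
    {Ω : Type*} [MeasurableSpace Ω] (μ : Measure Ω) [IsProbabilityMeasure μ]
    (L k : ℕ) (hL : 2 ≤ L) (hk : 1 ≤ k)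
    (p q : ℝ) (hp0 : 0 < p) (hp1 : p < 1) (hq0 : 0 ≤ q) (hq1 : q < 1)
    (Y U V : Ω → ℕ) (Z : Fin (L - 1) → Ω → ℕ)
    (hYmeas : Measurable Y) (hUmeas : Measurable U) (hVmeas : Measurable V)
    (hZmeas : ∀ j, Measurable (Z j))
    (hindep : iIndepFun
      (Sum.elim ![Y, U, V] Z : (Fin 3 ⊕ Fin (L - 1)) → Ω → ℕ) μ)
    (hY : ∀ m : ℕ, (μ {ω | Y ω = m}).toReal = p ^ m * (1 - p))
    (hZ : ∀ j, ∀ m : ℕ, (μ {ω | Z j ω = m}).toReal = q ^ m * (1 - q))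
    (hU : ∀ m : ℕ, k - 1 ≤ m →
      (μ {ω | U ω = m}).toReal = (m.choose (k - 1) : ℝ) * p ^ (m - (k - 1)) * (1 - p) ^ k)
    (hU0 : ∀ m : ℕ, m < k - 1 → μ {ω | U ω = m} = 0)
    (hV : ∀ m : ℕ, k - 1 ≤ m →
      (μ {ω | V ω = m}).toReal = (m.choose (k - 1) : ℝ) * q ^ (m - (k - 1)) * (1 - q) ^ k)
    (hV0 : ∀ m : ℕ, m < k - 1 → μ {ω | V ω = m} = 0)
    (W : Ω → ℕ)
    (hW : ∀ ω, W ω =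
      if (Finset.univ.sup fun j => Z j ω) ≤ Y ω then Y ω + U ω
      else (Finset.univ.sup fun j => Z j ω) + V ω)
    (m : ℕ) :
    (μ {ω | W ω = m}).toReal =
      p ^ (m + 1 - k) * (1 - p) ^ (k + 1) *
        (∑ x ∈ Finset.HasAntidiagonal.antidiagonal m,
          (1 - q ^ (x.1 + 1)) ^ (L - 1) * (x.2.choose (k - 1) : ℝ))
      + ∑ x ∈ Finset.HasAntidiagonal.antidiagonal m,
          ((1 - q ^ (x.1 + 1)) ^ (L - 1) - (1 - q ^ x.1) ^ (L - 1)) * (1 - p ^ x.1) *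
            (x.2.choose (k - 1) : ℝ) * q ^ (x.2 + 1 - k) * (1 - q) ^ k := by
  classical
  -- notation
  set S : Ω → ℕ := fun ω => Finset.univ.sup fun j => Z j ω with hSdef
  have hsup : ∀ (ω : Ω) (a : ℕ), S ω ≤ a ↔ ∀ j, Z j ω ≤ a := by
    intro ω a
    simp [hSdef, Finset.sup_le_iff]
  -- pointwise distribution facts, extended to all m
  have hU' : ∀ m2 : ℕ, (μ {ω | U ω = m2}).toReal
      = (m2.choose (k - 1) : ℝ) * p ^ (m2 - (k - 1)) * (1 - p) ^ k := by
    intro m2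
    by_cases h : k - 1 ≤ m2
    · exact hU m2 h
    · rw [hU0 m2 (by omega)]
      simp [Nat.choose_eq_zero_of_lt (by omega : m2 < k - 1)]
  have hV' : ∀ m2 : ℕ, (μ {ω | V ω = m2}).toReal
      = (m2.choose (k - 1) : ℝ) * q ^ (m2 - (k - 1)) * (1 - q) ^ k := by
    intro m2
    by_cases h : k - 1 ≤ m2
    · exact hV m2 h
    · rw [hV0 m2 (by omega)]
      simp [Nat.choose_eq_zero_of_lt (by omega : m2 < k - 1)]
  have hcdfY : ∀ n : ℕ, (μ {ω | Y ω < n}).toReal = 1 - p ^ n :=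
    aux_cdf μ Y hYmeas p hY
  have hcdfZ : ∀ j, ∀ a : ℕ, (μ {ω | Z j ω ≤ a}).toReal = 1 - q ^ (a + 1) := by
    intro j a
    have hse : {ω | Z j ω ≤ a} = {ω | Z j ω < a + 1} := by
      ext ω; simp [Nat.lt_succ_iff]
    rw [hse]
    exact aux_cdf μ (Z j) (hZmeas j) q (hZ j) (a + 1)
  -- the events
  set A : ℕ × ℕ → Set Ω := fun x =>
    Y ⁻¹' {x.1} ∩ U ⁻¹' {x.2} ∩ V ⁻¹' Set.univ ∩ {ω | ∀ j, Z j ω ≤ x.1} with hAdef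
  set Bbig : ℕ × ℕ → Set Ω := fun x =>
    Y ⁻¹' Set.Iio x.1 ∩ U ⁻¹' Set.univ ∩ V ⁻¹' {x.2} ∩ {ω | ∀ j, Z j ω ≤ x.1} with hBbigdef
  set Bsmall : ℕ × ℕ → Set Ω := fun x =>
    Y ⁻¹' Set.Iio x.1 ∩ U ⁻¹' Set.univ ∩ V ⁻¹' {x.2} ∩ {ω | ∀ j, Z j ω ≤ x.1 - 1} with hBsmalldef
  set B : ℕ × ℕ → Set Ω := fun x => Bbig x \ Bsmall x with hBdef
  -- membership characterizations
  have hmemA : ∀ x ω, ω ∈ A x ↔ Y ω = x.1 ∧ U ω = x.2 ∧ S ω ≤ x.1 := by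
    intro x ω
    simp [hAdef, hsup, and_assoc]
  have hmemB : ∀ x ω, ω ∈ B x ↔ S ω = x.1 ∧ V ω = x.2 ∧ Y ω < x.1 := by
    intro x ω
    simp only [hBdef, hBbigdef, hBsmalldef, Set.mem_diff, Set.mem_inter_iff,
      Set.mem_preimage, Set.mem_Iio, Set.mem_univ, Set.mem_singleton_iff,
      Set.mem_setOf_eq, true_and, and_true, not_and, ← hsup]
    constructor
    · rintro ⟨⟨⟨hy, hv⟩, hz⟩, hns⟩
      have h2 : ¬ S ω ≤ x.1 - 1 := fun h => hns ⟨hy, hv⟩ h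
      exact ⟨by omega, hv, hy⟩
    · rintro ⟨hs, hv, hy⟩
      exact ⟨⟨⟨hy, hv⟩, by omega⟩, fun _ h => by omega⟩
  -- measurability
  have hmeasZle : ∀ a : ℕ, MeasurableSet {ω | ∀ j, Z j ω ≤ a} := by
    intro a
    have : {ω | ∀ j, Z j ω ≤ a} = ⋂ j, (Z j) ⁻¹' Set.Iic a := by
      ext ω; simp
    rw [this]
    exact MeasurableSet.iInter fun j => (hZmeas j) measurableSet_Iic
  have hmeasA : ∀ x, MeasurableSet (A x) := by
    intro x
    exact (((hYmeas (measurableSet_singleton _)).inter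
      (hUmeas (measurableSet_singleton _))).inter
      (hVmeas MeasurableSet.univ)).inter (hmeasZle _)
  have hmeasBbig : ∀ x, MeasurableSet (Bbig x) := by
    intro x
    exact (((hYmeas measurableSet_Iio).inter (hUmeas MeasurableSet.univ)).inter
      (hVmeas (measurableSet_singleton _))).inter (hmeasZle _)
  have hmeasBsmall : ∀ x, MeasurableSet (Bsmall x) := by
    intro x
    exact (((hYmeas measurableSet_Iio).inter (hUmeas MeasurableSet.univ)).inter
      (hVmeas (measurableSet_singleton _))).inter (hmeasZle _)
  have hmeasB : ∀ x, MeasurableSet (B x) := fun x => (hmeasBbig x).diff (hmeasBsmall x)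
  -- decomposition of the event {W = m}
  have hWeq : {ω | W ω = m} = ⋃ x ∈ Finset.HasAntidiagonal.antidiagonal m, (A x ∪ B x) := by
    ext ω
    simp only [Set.mem_setOf_eq, Set.mem_iUnion, Set.mem_union, Finset.HasAntidiagonal.mem_antidiagonal,
      hmemA, hmemB, exists_prop]
    rw [hW ω, show (Finset.univ.sup fun j => Z j ω) = S ω from rfl]
    constructor
    · intro hw
      by_cases hc : S ω ≤ Y ω
      · rw [if_pos hc] at hw
        exact ⟨(Y ω, U ω), hw, Or.inl ⟨rfl, rfl, hc⟩⟩
      · rw [if_neg hc] at hw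
        exact ⟨(S ω, V ω), hw, Or.inr ⟨rfl, rfl, by omega⟩⟩
    · rintro ⟨x, hx, hA | hB⟩
      · obtain ⟨h1, h2, h3⟩ := hA
        rw [if_pos (by omega), h1, h2, hx]
      · obtain ⟨h1, h2, h3⟩ := hB
        rw [if_neg (by omega), h1, h2, hx]
  -- disjointness
  have hdisjAB : ∀ x, Disjoint (A x) (B x) := by
    intro x
    rw [Set.disjoint_left]
    intro ω hA hB
    rw [hmemA] at hA
    rw [hmemB] at hB
    omega
  have hdisj : (↑(Finset.HasAntidiagonal.antidiagonal m) : Set (ℕ × ℕ)).PairwiseDisjoint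
      (fun x => A x ∪ B x) := by
    intro x hx y hy hxy
    simp only [Finset.coe_sort_coe, Finset.mem_coe, Finset.HasAntidiagonal.mem_antidiagonal] at hx hy
    rw [Function.onFun, Set.disjoint_left]
    intro ω h1 h2
    rcases h1 with hA | hB <;> rcases h2 with hA' | hB'
    · rw [hmemA] at hA hA'
      exact hxy (Prod.ext (by omega) (by omega))
    · rw [hmemA] at hA
      rw [hmemB] at hB'
      omega
    · rw [hmemB] at hB
      rw [hmemA] at hA'
      omega
    · rw [hmemB] at hB hB'
      exact hxy (Prod.ext (by omega) (by omega))
  -- measure of the event as a sum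
  have hsum : μ {ω | W ω = m}
      = ∑ x ∈ Finset.HasAntidiagonal.antidiagonal m, (μ (A x) + μ (B x)) := by
    rw [hWeq, measure_biUnion_finset hdisj (fun x _ => (hmeasA x).union (hmeasB x))]
    exact Finset.sum_congr rfl fun x _ =>
      measure_union (hdisjAB x) (hmeasB x)
  -- values
  have hAval : ∀ x : ℕ × ℕ, (μ (A x)).toReal
      = (p ^ x.1 * (1 - p)) * ((x.2.choose (k - 1) : ℝ) * p ^ (x.2 - (k - 1)) * (1 - p) ^ k)
        * (1 - q ^ (x.1 + 1)) ^ (L - 1) := by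
    intro x
    rw [hAdef]
    rw [aux_key μ (L - 1) Y U V Z hindep {x.1} {x.2} Set.univ x.1]
    rw [ENNReal.toReal_mul, ENNReal.toReal_mul, ENNReal.toReal_mul, ENNReal.toReal_prod]
    rw [show Y ⁻¹' {x.1} = {ω | Y ω = x.1} from rfl, hY,
      show U ⁻¹' {x.2} = {ω | U ω = x.2} from rfl, hU',
      Set.preimage_univ, measure_univ]
    simp_rw [hcdfZ]
    rw [Finset.prod_const, Finset.card_univ, Fintype.card_fin]
    simp
  have hBval : ∀ x : ℕ × ℕ, (μ (B x)).toReal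
      = (1 - p ^ x.1) * ((x.2.choose (k - 1) : ℝ) * q ^ (x.2 - (k - 1)) * (1 - q) ^ k)
        * ((1 - q ^ (x.1 + 1)) ^ (L - 1) - (1 - q ^ (x.1 - 1 + 1)) ^ (L - 1)) := by
    intro x
    have hss : Bsmall x ⊆ Bbig x := by
      rw [hBbigdef, hBsmalldef]
      refine Set.inter_subset_inter (subset_refl _) ?_
      intro ω hω j
      exact le_trans (hω j) (by omega)
    have hval : ∀ a : ℕ, (μ (Y ⁻¹' Set.Iio x.1 ∩ U ⁻¹' Set.univ ∩ V ⁻¹' {x.2}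
        ∩ {ω | ∀ j, Z j ω ≤ a})).toReal
        = (1 - p ^ x.1) * ((x.2.choose (k - 1) : ℝ) * q ^ (x.2 - (k - 1)) * (1 - q) ^ k)
          * (1 - q ^ (a + 1)) ^ (L - 1) := by
      intro a
      rw [aux_key μ (L - 1) Y U V Z hindep (Set.Iio x.1) Set.univ {x.2} a]
      rw [ENNReal.toReal_mul, ENNReal.toReal_mul, ENNReal.toReal_mul, ENNReal.toReal_prod]
      rw [show Y ⁻¹' Set.Iio x.1 = {ω | Y ω < x.1} from rfl, hcdfY,
        show V ⁻¹' {x.2} = {ω | V ω = x.2} from rfl, hV',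
        Set.preimage_univ, measure_univ]
      simp_rw [hcdfZ]
      rw [Finset.prod_const, Finset.card_univ, Fintype.card_fin]
      simp
    rw [hBdef]
    rw [measure_diff hss (hmeasBsmall x).nullMeasurableSet (measure_ne_top μ _)]
    rw [ENNReal.toReal_sub_of_le (measure_mono hss) (measure_ne_top μ _)]
    rw [hBbigdef, hBsmalldef]
    rw [hval x.1, hval (x.1 - 1)]
    ring
  -- put it together
  rw [hsum, ENNReal.toReal_sum (fun x _ => by
    exact ENNReal.add_ne_top.mpr ⟨measure_ne_top μ _, measure_ne_top μ _⟩)]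
  simp_rw [ENNReal.toReal_add (measure_ne_top μ _) (measure_ne_top μ _)]
  rw [Finset.sum_add_distrib, Finset.mul_sum]
  congr 1
  · refine Finset.sum_congr rfl fun x hx => ?_
    rw [hAval x]
    by_cases h2 : k - 1 ≤ x.2
    · have hm : x.1 + x.2 = m := Finset.HasAntidiagonal.mem_antidiagonal.mp hx
      have hpe : p ^ (m + 1 - k) = p ^ x.1 * p ^ (x.2 - (k - 1)) := by
        rw [← pow_add]
        congr 1
        omega
      rw [hpe]
      ring
    · rw [Nat.choose_eq_zero_of_lt (by omega : x.2 < k - 1)]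
      simp
  · refine Finset.sum_congr rfl fun x hx => ?_
    rw [hBval x]
    rw [show x.2 + 1 - k = x.2 - (k - 1) from by omega]
    obtain ⟨x1, x2⟩ := x
    rcases x1 with _ | n
    · simp
    · simp only [Nat.succ_sub_one]
      ring
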